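/- arXiv:1103.0061 — 3 statements merged into one kernel-verified Lean document; each statement's English description precedes it below -/
import Mathlib

section
/- Let w₀ < w₁ < 0 be real numbers and set m := 4·√(w₀·w₁)/(√(−w₀) + √(−w₁))², which satisfies 0 < m < 1. Then ∫_{w=w₀}^{w₁} dw / √(w·(w−w₀)·(w−w₁)) = 4·K(1−m)/(√(−w₀) + √(−w₁)). -/
open MeasureTheory Real

/-- The complete elliptic integral of the first kind,
`K(m) = ∫₀¹ ds/(√(1−s²)·√(1−m s²))`. -/
noncomputable def ellipticK (m : ℝ) : ℝ :=
  ∫ s in (0 : ℝ)..1, 1 / (Real.sqrt (1 - s ^ 2) * Real.sqrt (1 - m * s ^ 2))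

open Set

set_option maxHeartbeats 1000000

lemma integrableOn_elliptic_integrand {k : ℝ} (hk0 : 0 ≤ k) (hk1 : k < 1) :
    IntegrableOn (fun s : ℝ => 1 / (Real.sqrt (1 - s ^ 2) * Real.sqrt (1 - k * s ^ 2)))
      (Ioo (0:ℝ) 1) := by
  have hmeas : AEStronglyMeasurable
      (fun s : ℝ => 1 / (Real.sqrt (1 - s ^ 2) * Real.sqrt (1 - k * s ^ 2)))
      (volume.restrict (Ioo (0:ℝ) 1)) := by
    have m1 : Measurable fun s : ℝ => Real.sqrt (1 - s ^ 2) :=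
      (Real.continuous_sqrt.comp (by continuity)).measurable
    have m2 : Measurable fun s : ℝ => Real.sqrt (1 - k * s ^ 2) :=
      (Real.continuous_sqrt.comp (by continuity)).measurable
    exact (measurable_const.div (m1.mul m2)).aestronglyMeasurable
  have h2 : IntervalIntegrable (fun x : ℝ => (1 - x) ^ (-(1/2) : ℝ)) volume 0 1 := by
    have h1 : IntervalIntegrable (fun x : ℝ => x ^ (-(1/2) : ℝ)) volume 0 1 :=
      intervalIntegral.intervalIntegrable_rpow' (by norm_num)
    have := h1.comp_sub_left 1
    simpa using this.symm
  have hg : IntegrableOn (fun x : ℝ => (Real.sqrt (1 - k))⁻¹ * ((1 - x) ^ (-(1/2) : ℝ)))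
      (Ioo (0:ℝ) 1) := by
    have := (intervalIntegrable_iff_integrableOn_Ioo_of_le (by norm_num : (0:ℝ) ≤ 1)).mp h2
    exact this.const_mul _
  refine hg.mono' hmeas ?_
  rw [ae_restrict_iff' measurableSet_Ioo]
  refine ae_of_all _ fun s hs => ?_
  obtain ⟨hs0, hs1⟩ := hs
  have h1s : 0 < 1 - s := by linarith
  have hks : 0 < 1 - k := by linarith
  have hA : Real.sqrt (1 - s) ≤ Real.sqrt (1 - s ^ 2) :=
    Real.sqrt_le_sqrt (by nlinarith)
  have hB : Real.sqrt (1 - k) ≤ Real.sqrt (1 - k * s ^ 2) :=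
    Real.sqrt_le_sqrt (by nlinarith [mul_le_mul_of_nonneg_left (by nlinarith : s ^ 2 ≤ 1) hk0])
  have hApos : 0 < Real.sqrt (1 - s) := Real.sqrt_pos.mpr h1s
  have hBpos : 0 < Real.sqrt (1 - k) := Real.sqrt_pos.mpr hks
  have hrw : (1 - s) ^ (-(1/2) : ℝ) = (Real.sqrt (1 - s))⁻¹ := by
    rw [Real.sqrt_eq_rpow, ← Real.rpow_neg h1s.le]
  rw [hrw, Real.norm_eq_abs, abs_of_nonneg (by positivity), ← mul_inv, div_eq_mul_inv, one_mul]
  apply inv_anti₀ (by positivity)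
  calc Real.sqrt (1 - k) * Real.sqrt (1 - s)
      ≤ Real.sqrt (1 - k * s ^ 2) * Real.sqrt (1 - s ^ 2) :=
        mul_le_mul hB hA (Real.sqrt_nonneg _) (Real.sqrt_nonneg _)
    _ = Real.sqrt (1 - s ^ 2) * Real.sqrt (1 - k * s ^ 2) := mul_comm _ _


noncomputable def qq (a b s : ℝ) : ℝ :=
  (a+b)/2 - ((Real.sqrt b - Real.sqrt a)^2/2) * s^2

noncomputable def SS (a b s : ℝ) : ℝ := Real.sqrt (qq a b s ^ 2 - a*b)

noncomputable def pp (a b ε s : ℝ) : ℝ := qq a b s + ε * SS a b s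

/-- Basic facts about `qq` and `SS` for `s ∈ (0,1)`. -/
lemma L_facts {a b s : ℝ} (ha : 0 < a) (hab : a < b) (hs0 : 0 < s) (hs1 : s < 1) :
    Real.sqrt (a*b) < qq a b s ∧ 0 < SS a b s ∧ SS a b s ^ 2 = qq a b s ^ 2 - a*b ∧
    qq a b s - Real.sqrt (a*b) < SS a b s ∧ SS a b s < (b-a)/2 ∧
    SS a b s < qq a b s - a ∧ qq a b s < (a+b)/2 := by
  have hb : 0 < b := ha.trans hab
  have hsa : 0 < Real.sqrt a := Real.sqrt_pos.mpr ha
  have hsb : 0 < Real.sqrt b := Real.sqrt_pos.mpr hb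
  have hsasb : Real.sqrt a < Real.sqrt b := Real.sqrt_lt_sqrt ha.le hab
  have hsa2 : Real.sqrt a ^ 2 = a := Real.sq_sqrt ha.le
  have hsb2 : Real.sqrt b ^ 2 = b := Real.sq_sqrt hb.le
  have hc : Real.sqrt (a*b) = Real.sqrt a * Real.sqrt b := Real.sqrt_mul ha.le b
  have hc0 : 0 < Real.sqrt (a*b) := by rw [hc]; positivity
  have hc2 : Real.sqrt (a*b) ^ 2 = a * b := Real.sq_sqrt (by positivity)
  have hB : 0 < Real.sqrt b - Real.sqrt a := sub_pos.mpr hsasb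
  have hB2 : (Real.sqrt b - Real.sqrt a) ^ 2 = a + b - 2*Real.sqrt (a*b) := by
    rw [hc]; nlinarith [hsa2, hsb2]
  have hac : a < Real.sqrt (a*b) := by nlinarith
  have hq1 : qq a b s - Real.sqrt (a*b) = ((Real.sqrt b - Real.sqrt a)^2/2) * (1 - s^2) := by
    rw [qq]; linear_combination (-(1/2)) * hB2
  have hs2 : 0 < 1 - s^2 := by nlinarith
  have hqc : Real.sqrt (a*b) < qq a b s := by
    linarith [mul_pos (div_pos (pow_pos hB 2) two_pos) hs2]
  have hqub : qq a b s < (a+b)/2 := by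
    rw [qq]
    have := mul_pos (div_pos (pow_pos hB 2) two_pos) (pow_pos hs0 2)
    linarith
  have hu : 0 < qq a b s ^ 2 - a*b := by
    nlinarith [mul_pos (sub_pos.mpr hqc) (by linarith : 0 < qq a b s + Real.sqrt (a*b)), hc2]
  have hS0 : 0 < SS a b s := Real.sqrt_pos.mpr hu
  have hS2 : SS a b s ^ 2 = qq a b s ^ 2 - a*b := Real.sq_sqrt hu.le
  have hBs : a + b - 2 * qq a b s = (Real.sqrt b - Real.sqrt a)^2 * s^2 := by rw [qq]; ring
  have h4 : qq a b s - Real.sqrt (a*b) < SS a b s := by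
    have hsq : (qq a b s - Real.sqrt (a*b))^2 < SS a b s ^ 2 := by
      rw [hS2]
      nlinarith [mul_pos hc0 (sub_pos.mpr hqc), hc2]
    exact lt_of_pow_lt_pow_left₀ 2 hS0.le hsq
  have h5 : SS a b s < (b-a)/2 := by
    have hsq : SS a b s ^ 2 < ((b-a)/2) ^ 2 := by
      rw [hS2]
      nlinarith [mul_pos (sub_pos.mpr hqub) (by linarith : 0 < (a+b)/2 + qq a b s)]
    exact lt_of_pow_lt_pow_left₀ 2 (by linarith) hsq
  have h6 : SS a b s < qq a b s - a := by
    have hsq : SS a b s ^ 2 < (qq a b s - a) ^ 2 := by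
      rw [hS2]
      have key0 : 0 < a * ((Real.sqrt b - Real.sqrt a)^2 * s^2) :=
        mul_pos ha (mul_pos (pow_pos hB 2) (pow_pos hs0 2))
      have key : 0 < a * (a + b - 2 * qq a b s) := by rw [hBs]; exact key0
      nlinarith [key]
    exact lt_of_pow_lt_pow_left₀ 2 (by nlinarith) hsq
  exact ⟨hqc, hS0, hS2, h4, h5, h6, hqub⟩

lemma L_quad {a b ε s : ℝ} (hε2 : ε^2 = 1) (hS2 : SS a b s ^ 2 = qq a b s ^ 2 - a*b) :
    pp a b ε s ^ 2 - 2 * qq a b s * pp a b ε s + a*b = 0 := by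
  rw [pp]; linear_combination SS a b s ^ 2 * hε2 + hS2

lemma L_mem {a b ε s : ℝ} (ha : 0 < a) (hab : a < b) (hε : ε = 1 ∨ ε = -1)
    (hs0 : 0 < s) (hs1 : s < 1) :
    pp a b ε s ∈ (if ε = 1 then Ioo (Real.sqrt (a*b)) b else Ioo a (Real.sqrt (a*b))) := by
  obtain ⟨h1, h2, h3, h4, h5, h6, h7⟩ := L_facts ha hab hs0 hs1
  rcases hε with rfl | rfl
  · simp only [if_pos rfl, mem_Ioo, pp, one_mul]
    constructor <;> linarith
  · norm_num only [pp, mem_Ioo]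
    constructor <;> [linarith; linarith]

lemma L_surj {a b ε t : ℝ} (ha : 0 < a) (hab : a < b) (hε : ε = 1 ∨ ε = -1)
    (ht1 : a < t) (ht2 : t < b) (hside : 0 < ε * (t - Real.sqrt (a*b))) :
    ∃ s, s ∈ Ioo (0:ℝ) 1 ∧ pp a b ε s = t := by
  have hb : 0 < b := ha.trans hab
  have ht0 : 0 < t := ha.trans ht1
  have hsasb : Real.sqrt a < Real.sqrt b := Real.sqrt_lt_sqrt ha.le hab
  have hB : 0 < Real.sqrt b - Real.sqrt a := sub_pos.mpr hsasb
  have hc2 : Real.sqrt (a*b) ^ 2 = a * b := Real.sq_sqrt (by positivity)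
  have hB2 : (Real.sqrt b - Real.sqrt a) ^ 2 = a + b - 2*Real.sqrt (a*b) := by
    rw [Real.sqrt_mul ha.le b]
    nlinarith [Real.sq_sqrt ha.le, Real.sq_sqrt hb.le]
  have htc : t - Real.sqrt (a*b) ≠ 0 := by
    intro h; rw [h, mul_zero] at hside; exact lt_irrefl 0 hside
  have hX0 : 0 < (t-a)*(b-t)/t := by
    apply div_pos (mul_pos (by linarith) (by linarith)) ht0
  set s : ℝ := Real.sqrt ((t-a)*(b-t)/t) / (Real.sqrt b - Real.sqrt a) with hs_def
  have hs0 : 0 < s := div_pos (Real.sqrt_pos.mpr hX0) hB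
  have hs1 : s < 1 := by
    rw [hs_def, div_lt_one hB]
    rw [Real.sqrt_lt' hB]
    rw [div_lt_iff₀ ht0]
    have htsq : 0 < (t - Real.sqrt (a*b))^2 := by positivity
    nlinarith [hB2, hc2]
  have hssq : s ^ 2 = (t-a)*(b-t)/t / (Real.sqrt b - Real.sqrt a)^2 := by
    rw [hs_def, div_pow, Real.sq_sqrt hX0.le]
  have hq_val : qq a b s = (t^2 + a*b)/(2*t) := by
    rw [qq, hssq]
    field_simp
    ring
  have hq2 : qq a b s ^ 2 - a*b = ((t^2 - a*b)/(2*t))^2 := by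
    rw [hq_val]; field_simp; ring
  refine ⟨s, ⟨hs0, hs1⟩, ?_⟩
  rw [pp, SS, hq2, Real.sqrt_sq_eq_abs, hq_val]
  rcases hε with rfl | rfl
  · have htc' : Real.sqrt (a*b) < t := by nlinarith
    have : 0 < (t^2 - a*b)/(2*t) := by
      apply div_pos _ (by linarith)
      nlinarith [hc2, mul_pos (sub_pos.mpr htc') (show 0 < t + Real.sqrt (a*b) by positivity)]
    rw [abs_of_pos this]
    field_simp
    ring
  · have htc' : t < Real.sqrt (a*b) := by nlinarith
    have h0 : 0 < Real.sqrt (a*b) := Real.sqrt_pos.mpr (by positivity)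
    have : (t^2 - a*b)/(2*t) < 0 := by
      apply div_neg_of_neg_of_pos _ (by linarith)
      nlinarith [hc2, mul_pos (sub_pos.mpr htc') (show 0 < Real.sqrt (a*b) + t by positivity)]
    rw [abs_of_neg this]
    field_simp
    ring

lemma L_deriv {a b ε s : ℝ} (hu : 0 < qq a b s ^ 2 - a*b) :
    HasDerivAt (fun x => pp a b ε x)
      (-((Real.sqrt b - Real.sqrt a)^2 * s) * (SS a b s + ε * qq a b s) / SS a b s) s := by
  have hS0 : 0 < SS a b s := Real.sqrt_pos.mpr hu
  have hq' : HasDerivAt (fun x => qq a b x) (-((Real.sqrt b - Real.sqrt a)^2 * s)) s := by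
    simp only [qq]
    have h := ((hasDerivAt_pow 2 s).const_mul ((Real.sqrt b - Real.sqrt a)^2/2)).const_sub
      ((a+b)/2)
    refine h.congr_deriv ?_
    push_cast; ring
  have hinner : HasDerivAt (fun x => qq a b x ^ 2 - a*b)
      (2 * qq a b s * (-((Real.sqrt b - Real.sqrt a)^2 * s))) s := by
    have h := (hq'.pow 2).sub_const (a*b)
    refine h.congr_deriv ?_
    push_cast; ring
  have hS' : HasDerivAt (fun x => SS a b x)
      (1/(2 * SS a b s) * (2 * qq a b s * (-((Real.sqrt b - Real.sqrt a)^2 * s)))) s := by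
    simp only [SS]
    exact (Real.hasDerivAt_sqrt hu.ne').comp s hinner
  have h := hq'.add (hS'.const_mul ε)
  have hfun : (fun x => pp a b ε x) = fun x => qq a b x + ε * SS a b x := by
    funext x; rw [pp]
  rw [hfun]
  refine h.congr_deriv ?_
  rw [SS] at hS0 ⊢
  field_simp
  ring

lemma L_point {a b ε s : ℝ} (ha : 0 < a) (hab : a < b) (hε : ε = 1 ∨ ε = -1)
    (hs0 : 0 < s) (hs1 : s < 1) :
    |(-((Real.sqrt b - Real.sqrt a)^2 * s) * (SS a b s + ε * qq a b s) / SS a b s)| *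
      (1 / Real.sqrt (pp a b ε s * (pp a b ε s - a) * (b - pp a b ε s)))
    = (2/(Real.sqrt a + Real.sqrt b)) *
      (1 / (Real.sqrt (1-s^2) *
        Real.sqrt (1 - ((Real.sqrt b - Real.sqrt a)^2/(Real.sqrt a + Real.sqrt b)^2) * s^2))) := by
  have hb : 0 < b := ha.trans hab
  have hsa : 0 < Real.sqrt a := Real.sqrt_pos.mpr ha
  have hsb : 0 < Real.sqrt b := Real.sqrt_pos.mpr hb
  have hsasb : Real.sqrt a < Real.sqrt b := Real.sqrt_lt_sqrt ha.le hab
  have hB : 0 < Real.sqrt b - Real.sqrt a := sub_pos.mpr hsasb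
  have hA : 0 < Real.sqrt a + Real.sqrt b := by positivity
  have hc0 : 0 < Real.sqrt (a*b) := Real.sqrt_pos.mpr (by positivity)
  have hc2 : Real.sqrt (a*b) ^ 2 = a * b := Real.sq_sqrt (by positivity)
  have hB2 : (Real.sqrt b - Real.sqrt a) ^ 2 = a + b - 2*Real.sqrt (a*b) := by
    rw [Real.sqrt_mul ha.le b]
    nlinarith [Real.sq_sqrt ha.le, Real.sq_sqrt hb.le]
  have hA2 : (Real.sqrt a + Real.sqrt b) ^ 2 = a + b + 2*Real.sqrt (a*b) := by
    rw [Real.sqrt_mul ha.le b]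
    nlinarith [Real.sq_sqrt ha.le, Real.sq_sqrt hb.le]
  have hcc : Real.sqrt (a*b) = Real.sqrt a * Real.sqrt b := Real.sqrt_mul ha.le b
  obtain ⟨h1, hS0, hS2, h4, h5, h6, h7⟩ := L_facts ha hab hs0 hs1
  have hε2 : ε ^ 2 = 1 := by rcases hε with rfl | rfl <;> norm_num
  have hφ0 : 0 < pp a b ε s := by
    rcases hε with rfl | rfl
    · rw [pp]; nlinarith
    · rw [pp]; nlinarith
  have hBs : a + b - 2 * qq a b s = (Real.sqrt b - Real.sqrt a)^2 * s^2 := by rw [qq]; ring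
  -- |f'| = B^2 s φ / S
  have habs : |(-((Real.sqrt b - Real.sqrt a)^2 * s) * (SS a b s + ε * qq a b s) / SS a b s)|
      = (Real.sqrt b - Real.sqrt a)^2 * s * pp a b ε s / SS a b s := by
    rcases hε with rfl | rfl
    · rw [abs_div, abs_of_pos hS0, abs_mul]
      rw [abs_of_nonpos (by nlinarith : -((Real.sqrt b - Real.sqrt a)^2 * s) ≤ 0)]
      rw [abs_of_pos (by nlinarith : 0 < SS a b s + 1 * qq a b s)]
      rw [pp]; ring
    · rw [abs_div, abs_of_pos hS0, abs_mul]
      rw [abs_of_nonpos (by nlinarith : -((Real.sqrt b - Real.sqrt a)^2 * s) ≤ 0)]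
      rw [abs_of_neg (by nlinarith : SS a b s + (-1) * qq a b s < 0)]
      rw [pp]; ring
  -- φ(φ-a)(b-φ) = (B s φ)^2
  have hkey : pp a b ε s * (pp a b ε s - a) * (b - pp a b ε s)
      = ((Real.sqrt b - Real.sqrt a) * s * pp a b ε s)^2 := by
    have hq := L_quad (a := a) (b := b) hε2 hS2
    linear_combination (-(pp a b ε s)) * hq + (pp a b ε s)^2 * hBs
  have hsqrtkey : Real.sqrt (pp a b ε s * (pp a b ε s - a) * (b - pp a b ε s))
      = (Real.sqrt b - Real.sqrt a) * s * pp a b ε s := by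
    rw [hkey, Real.sqrt_sq (by positivity)]
  -- S = (A*B/2) * sqrt(1-s^2) * sqrt(1-k2 s^2)
  have hs2 : 0 < 1 - s^2 := by nlinarith
  have hk2s : 0 < 1 - ((Real.sqrt b - Real.sqrt a)^2/(Real.sqrt a + Real.sqrt b)^2) * s^2 := by
    have hlt : (Real.sqrt b - Real.sqrt a)^2/(Real.sqrt a + Real.sqrt b)^2 < 1 := by
      rw [div_lt_one (by positivity)]
      nlinarith
    have hge : 0 ≤ (Real.sqrt b - Real.sqrt a)^2/(Real.sqrt a + Real.sqrt b)^2 := by positivity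
    nlinarith [mul_le_mul_of_nonneg_left (le_of_lt (show s^2 < 1 by nlinarith)) hge]
  have hr1 : Real.sqrt (1-s^2) ^ 2 = 1 - s^2 := Real.sq_sqrt hs2.le
  have hr2 : Real.sqrt (1 - ((Real.sqrt b - Real.sqrt a)^2/(Real.sqrt a + Real.sqrt b)^2) * s^2) ^ 2
      = 1 - ((Real.sqrt b - Real.sqrt a)^2/(Real.sqrt a + Real.sqrt b)^2) * s^2 :=
    Real.sq_sqrt hk2s.le
  have hSval : SS a b s = ((Real.sqrt a + Real.sqrt b) * (Real.sqrt b - Real.sqrt a)/2) *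
      (Real.sqrt (1-s^2) *
        Real.sqrt (1 - ((Real.sqrt b - Real.sqrt a)^2/(Real.sqrt a + Real.sqrt b)^2) * s^2)) := by
    rw [SS]
    rw [show qq a b s ^ 2 - a*b
        = (((Real.sqrt a + Real.sqrt b) * (Real.sqrt b - Real.sqrt a)/2) *
          (Real.sqrt (1-s^2) *
            Real.sqrt (1 - ((Real.sqrt b - Real.sqrt a)^2/(Real.sqrt a + Real.sqrt b)^2) * s^2)))^2
      from ?_]
    · exact Real.sqrt_sq (by positivity)
    · rw [mul_pow, mul_pow, hr1, hr2]
      have e1 : ((Real.sqrt a + Real.sqrt b) * (Real.sqrt b - Real.sqrt a)/2)^2 *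
          ((1-s^2) * (1 - ((Real.sqrt b - Real.sqrt a)^2/(Real.sqrt a + Real.sqrt b)^2) * s^2))
          = ((Real.sqrt b - Real.sqrt a)^2/4) *
            ((1-s^2) * ((Real.sqrt a + Real.sqrt b)^2 - (Real.sqrt b - Real.sqrt a)^2 * s^2)) := by
        field_simp
        ring
      rw [e1, qq]
      linear_combination hc2 + (-(4*Real.sqrt a*Real.sqrt b)) * hcc
        + (-((Real.sqrt b - Real.sqrt a)^2)/4 + s^2*(Real.sqrt b - Real.sqrt a)^2/4
            + ((Real.sqrt a + Real.sqrt b)^2 - (a+b+2*Real.sqrt (a*b)))/4) * hB2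
        + (-((Real.sqrt a + Real.sqrt b)^2)/4 + s^2*(Real.sqrt b - Real.sqrt a)^2/4) * hA2
  rw [habs, hsqrtkey, hSval]
  have hx1 : 0 < Real.sqrt (1-s^2) := Real.sqrt_pos.mpr hs2
  have hx2 : 0 < Real.sqrt (1 - ((Real.sqrt b - Real.sqrt a)^2/(Real.sqrt a + Real.sqrt b)^2) * s^2) :=
    Real.sqrt_pos.mpr hk2s
  set x := Real.sqrt (1-s^2) with hx_def
  set y := Real.sqrt (1 - ((Real.sqrt b - Real.sqrt a)^2/(Real.sqrt a + Real.sqrt b)^2) * s^2)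
    with hy_def
  set P := pp a b ε s with hP_def
  have hBne : Real.sqrt b - Real.sqrt a ≠ 0 := ne_of_gt hB
  have hAne : Real.sqrt a + Real.sqrt b ≠ 0 := ne_of_gt hA
  have hsne : s ≠ 0 := ne_of_gt hs0
  have hPne : P ≠ 0 := ne_of_gt hφ0
  have hxne : x ≠ 0 := ne_of_gt hx1
  have hyne : y ≠ 0 := ne_of_gt hx2
  field_simp

lemma core (a b ε : ℝ) (ha : 0 < a) (hab : a < b) (hε : ε = 1 ∨ ε = -1)
    (T : Set ℝ)
    (hT : T = if ε = 1 then Ioo (Real.sqrt (a*b)) b else Ioo a (Real.sqrt (a*b))) :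
    IntegrableOn (fun t => 1 / Real.sqrt (t * (t - a) * (b - t))) T ∧
    (∫ t in T, 1 / Real.sqrt (t * (t - a) * (b - t)))
      = ∫ s in Ioo (0:ℝ) 1,
          (2 / (Real.sqrt a + Real.sqrt b)) *
            (1 / (Real.sqrt (1 - s^2) *
              Real.sqrt (1 - ((Real.sqrt b - Real.sqrt a)^2/(Real.sqrt a + Real.sqrt b)^2) * s^2))) := by
  have hb : 0 < b := ha.trans hab
  have hsa : 0 < Real.sqrt a := Real.sqrt_pos.mpr ha
  have hsb : 0 < Real.sqrt b := Real.sqrt_pos.mpr hb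
  have hsasb : Real.sqrt a < Real.sqrt b := Real.sqrt_lt_sqrt ha.le hab
  have hB : 0 < Real.sqrt b - Real.sqrt a := sub_pos.mpr hsasb
  have hA : 0 < Real.sqrt a + Real.sqrt b := by positivity
  have hc0 : 0 < Real.sqrt (a*b) := Real.sqrt_pos.mpr (by positivity)
  have hc2 : Real.sqrt (a*b) ^ 2 = a * b := Real.sq_sqrt (by positivity)
  have hac : a < Real.sqrt (a*b) := by
    have : a ^ 2 < Real.sqrt (a*b) ^ 2 := by rw [hc2]; nlinarith
    exact lt_of_pow_lt_pow_left₀ 2 hc0.le this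
  have hcb : Real.sqrt (a*b) < b := by
    have : Real.sqrt (a*b) ^ 2 < b ^ 2 := by rw [hc2]; nlinarith
    exact lt_of_pow_lt_pow_left₀ 2 hb.le this
  -- side conditions for points of T
  have hmem : ∀ t ∈ T, a < t ∧ t < b ∧ 0 < ε * (t - Real.sqrt (a*b)) := by
    rcases hε with rfl | rfl
    · rw [hT, if_pos rfl]
      rintro t ⟨ht1, ht2⟩
      exact ⟨hac.trans ht1, ht2, by nlinarith⟩
    · rw [hT, if_neg (by norm_num)]
      rintro t ⟨ht1, ht2⟩
      exact ⟨ht1, ht2.trans hcb, by nlinarith⟩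
  -- image identification
  have himg : (fun s => pp a b ε s) '' Ioo 0 1 = T := by
    apply Subset.antisymm
    · rintro t ⟨s, ⟨hs0, hs1⟩, rfl⟩
      rw [hT]
      exact L_mem ha hab hε hs0 hs1
    · intro t ht
      obtain ⟨ht1, ht2, hside⟩ := hmem t ht
      obtain ⟨s, hs, hps⟩ := L_surj ha hab hε ht1 ht2 hside
      exact ⟨s, hs, hps⟩
  have hppos : ∀ s ∈ Ioo (0:ℝ) 1, 0 < pp a b ε s := by
    intro s hs
    have h := L_mem ha hab hε hs.1 hs.2
    rcases hε with rfl | rfl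
    · rw [if_pos rfl] at h; exact hc0.trans h.1
    · rw [if_neg (by norm_num)] at h; exact ha.trans h.1
  -- derivative
  set f' : ℝ → ℝ := fun s =>
    -((Real.sqrt b - Real.sqrt a)^2 * s) * (SS a b s + ε * qq a b s) / SS a b s with hf'_def
  have hderiv : ∀ s ∈ Ioo (0:ℝ) 1,
      HasDerivWithinAt (fun x => pp a b ε x) (f' s) (Ioo (0:ℝ) 1) s := by
    intro s hs
    obtain ⟨h1, hS0, hS2, h4, h5, h6, h7⟩ := L_facts ha hab hs.1 hs.2
    have hu : 0 < qq a b s ^ 2 - a*b := by rw [← hS2]; positivity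
    exact (L_deriv hu).hasDerivWithinAt
  -- injectivity
  have hinj : InjOn (fun x => pp a b ε x) (Ioo (0:ℝ) 1) := by
    intro s1 h1 s2 h2 heq
    simp only at heq
    have hε2 : ε ^ 2 = 1 := by rcases hε with rfl | rfl <;> norm_num
    obtain ⟨_, _, hS21, _, _, _, _⟩ := L_facts ha hab h1.1 h1.2
    obtain ⟨_, _, hS22, _, _, _, _⟩ := L_facts ha hab h2.1 h2.2
    have hq1 := L_quad (a := a) (b := b) hε2 hS21
    have hq2 := L_quad (a := a) (b := b) hε2 hS22
    rw [← heq] at hq2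
    have h3 : 2 * pp a b ε s1 * (qq a b s2 - qq a b s1) = 0 := by
      linear_combination hq1 - hq2
    have hp0 : pp a b ε s1 ≠ 0 := ne_of_gt (hppos s1 h1)
    have hqq : qq a b s1 = qq a b s2 := by
      rcases mul_eq_zero.mp h3 with h | h
      · rcases mul_eq_zero.mp h with h' | h'
        · norm_num at h'
        · exact absurd h' hp0
      · linarith
    simp only [qq] at hqq
    have h4 : (s1 - s2) * ((s1 + s2) * ((Real.sqrt b - Real.sqrt a)^2/2)) = 0 := by
      linear_combination -hqq
    rcases mul_eq_zero.mp h4 with h | h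
    · linarith
    · rcases mul_eq_zero.mp h with h' | h'
      · nlinarith [h1.1, h2.1]
      · have : (Real.sqrt b - Real.sqrt a)^2 ≠ 0 := by positivity
        exact absurd (by linarith) this
  have hk0 : (0:ℝ) ≤ (Real.sqrt b - Real.sqrt a)^2/(Real.sqrt a + Real.sqrt b)^2 := by positivity
  have hk1 : (Real.sqrt b - Real.sqrt a)^2/(Real.sqrt a + Real.sqrt b)^2 < 1 := by
    rw [div_lt_one (by positivity)]
    nlinarith [mul_pos hsa hsb]
  have hint := (integrableOn_elliptic_integrand hk0 hk1).const_mul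
    (2 / (Real.sqrt a + Real.sqrt b))
  have hEq : EqOn
      (fun s => (2 / (Real.sqrt a + Real.sqrt b)) *
        (1 / (Real.sqrt (1 - s^2) *
          Real.sqrt (1 - ((Real.sqrt b - Real.sqrt a)^2/(Real.sqrt a + Real.sqrt b)^2) * s^2))))
      (fun s => |f' s| • (1 / Real.sqrt (pp a b ε s * (pp a b ε s - a) * (b - pp a b ε s))))
      (Ioo (0:ℝ) 1) := by
    intro s hs
    simp only [smul_eq_mul]
    exact (L_point ha hab hε hs.1 hs.2).symm
  constructor
  · rw [← himg, integrableOn_image_iff_integrableOn_abs_deriv_smul measurableSet_Ioo hderiv hinj]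
    exact MeasureTheory.IntegrableOn.congr_fun hint hEq measurableSet_Ioo
  · rw [← himg, integral_image_eq_integral_abs_deriv_smul measurableSet_Ioo hderiv hinj]
    exact (setIntegral_congr_fun measurableSet_Ioo hEq).symm

/-- **Complementary period of the rotational outer parametrix.** For `w₀ < w₁ < 0` and
`m = 4√(w₀w₁)/(√(−w₀)+√(−w₁))²` one has `0 < m < 1` and
`∫_{w₀}^{w₁} dw/√(w(w−w₀)(w−w₁)) = 4K(1−m)/(√(−w₀)+√(−w₁))`. -/
theorem rotational_complementary_period_integral
    (w₀ w₁ m : ℝ) (h₀₁ : w₀ < w₁) (h₁ : w₁ < 0)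
    (hm : m = 4 * Real.sqrt (w₀ * w₁) / (Real.sqrt (-w₀) + Real.sqrt (-w₁)) ^ 2) :
    (0 < m ∧ m < 1) ∧
    ∫ w in w₀..w₁, 1 / Real.sqrt (w * (w - w₀) * (w - w₁))
      = 4 * ellipticK (1 - m) / (Real.sqrt (-w₀) + Real.sqrt (-w₁)) := by
  set a := -w₁ with ha_def
  set b := -w₀ with hb_def
  have ha : 0 < a := by rw [ha_def]; linarith
  have hab : a < b := by rw [ha_def, hb_def]; linarith
  have hb : 0 < b := ha.trans hab
  have hw0 : w₀ = -b := by rw [hb_def]; ring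
  have hw1 : w₁ = -a := by rw [ha_def]; ring
  have hnw0 : -w₀ = b := by rw [hw0]; ring
  have hnw1 : -w₁ = a := by rw [hw1]; ring
  have hsa : 0 < Real.sqrt a := Real.sqrt_pos.mpr ha
  have hsb : 0 < Real.sqrt b := Real.sqrt_pos.mpr hb
  have hsasb : Real.sqrt a < Real.sqrt b := Real.sqrt_lt_sqrt ha.le hab
  have hB : 0 < Real.sqrt b - Real.sqrt a := sub_pos.mpr hsasb
  have hA : 0 < Real.sqrt a + Real.sqrt b := by positivity
  have hc0 : 0 < Real.sqrt (a*b) := Real.sqrt_pos.mpr (by positivity)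
  have hc2 : Real.sqrt (a*b) ^ 2 = a * b := Real.sq_sqrt (by positivity)
  have hB2 : (Real.sqrt b - Real.sqrt a) ^ 2 = a + b - 2*Real.sqrt (a*b) := by
    rw [Real.sqrt_mul ha.le b]
    nlinarith [Real.sq_sqrt ha.le, Real.sq_sqrt hb.le]
  have hA2 : (Real.sqrt a + Real.sqrt b) ^ 2 = a + b + 2*Real.sqrt (a*b) := by
    rw [Real.sqrt_mul ha.le b]
    nlinarith [Real.sq_sqrt ha.le, Real.sq_sqrt hb.le]
  have hac : a < Real.sqrt (a*b) := by
    have : a ^ 2 < Real.sqrt (a*b) ^ 2 := by rw [hc2]; nlinarith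
    exact lt_of_pow_lt_pow_left₀ 2 hc0.le this
  have hcb : Real.sqrt (a*b) < b := by
    have : Real.sqrt (a*b) ^ 2 < b ^ 2 := by rw [hc2]; nlinarith
    exact lt_of_pow_lt_pow_left₀ 2 hb.le this
  have habm : w₀ * w₁ = a * b := by rw [hw0, hw1]; ring
  have hcc : Real.sqrt (a*b) = Real.sqrt a * Real.sqrt b := Real.sqrt_mul ha.le b
  have hm' : m = 4 * Real.sqrt (a*b) / (Real.sqrt a + Real.sqrt b)^2 := by
    rw [hm, habm, add_comm (Real.sqrt b) (Real.sqrt a)]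
  have h1m : 1 - m = (Real.sqrt b - Real.sqrt a)^2/(Real.sqrt a + Real.sqrt b)^2 := by
    rw [hm', eq_div_iff (ne_of_gt (by positivity : (0:ℝ) < (Real.sqrt a + Real.sqrt b)^2))]
    field_simp
    linear_combination hA2 - hB2
  have hm0 : 0 < m := by rw [hm']; positivity
  have hm1 : m < 1 := by
    have h : 0 < 1 - m := by rw [h1m]; positivity
    linarith
  refine ⟨⟨hm0, hm1⟩, ?_⟩
  -- transform LHS to Ioo a b
  have h2 : ∀ t : ℝ, 1 / Real.sqrt ((-t) * ((-t) - w₀) * ((-t) - w₁))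
      = 1 / Real.sqrt (t * (t - a) * (b - t)) := by
    intro t
    rw [show (-t) * ((-t) - w₀) * ((-t) - w₁) = t * (t - a) * (b - t) from by
      rw [hw0, hw1]; ring]
  have hLHS : (∫ w in w₀..w₁, 1 / Real.sqrt (w * (w - w₀) * (w - w₁)))
      = ∫ t in Ioo a b, 1 / Real.sqrt (t * (t - a) * (b - t)) := by
    have hcn := intervalIntegral.integral_comp_neg (a := a) (b := b)
      (fun w => 1 / Real.sqrt (w * (w - w₀) * (w - w₁)))
    rw [← hw0, ← hw1] at hcn
    rw [← hcn]
    rw [show (∫ x in a..b, 1 / Real.sqrt (-x * (-x - w₀) * (-x - w₁)))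
        = ∫ t in a..b, 1 / Real.sqrt (t * (t - a) * (b - t)) from
      intervalIntegral.integral_congr (fun t _ => h2 t)]
    rw [intervalIntegral.integral_of_le hab.le, integral_Ioc_eq_integral_Ioo]
  obtain ⟨hi1, he1⟩ := core a b (-1) ha hab (Or.inr rfl) (Ioo a (Real.sqrt (a*b)))
    (by norm_num)
  obtain ⟨hi2, he2⟩ := core a b 1 ha hab (Or.inl rfl) (Ioo (Real.sqrt (a*b)) b)
    (by norm_num)
  have hsplit : Ioc a (Real.sqrt (a*b)) ∪ Ioo (Real.sqrt (a*b)) b = Ioo a b :=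
    Ioc_union_Ioo_eq_Ioo hac.le hcb
  have hdisj : Disjoint (Ioc a (Real.sqrt (a*b))) (Ioo (Real.sqrt (a*b)) b) := by
    rw [Set.disjoint_left]
    rintro x ⟨_, hx2⟩ ⟨hx3, _⟩
    exact absurd hx2 (not_le.mpr hx3)
  have hi1' : IntegrableOn (fun t => 1 / Real.sqrt (t * (t - a) * (b - t)))
      (Ioc a (Real.sqrt (a*b))) :=
    (integrableOn_Ioc_iff_integrableOn_Ioo).mpr hi1
  have hsum : (∫ t in Ioo a b, 1 / Real.sqrt (t * (t - a) * (b - t)))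
      = (∫ t in Ioc a (Real.sqrt (a*b)), 1 / Real.sqrt (t * (t - a) * (b - t)))
        + ∫ t in Ioo (Real.sqrt (a*b)) b, 1 / Real.sqrt (t * (t - a) * (b - t)) := by
    rw [← hsplit, setIntegral_union hdisj measurableSet_Ioo hi1' hi2]
  have hK : ellipticK (1 - m) = ∫ s in Ioo (0:ℝ) 1,
      1 / (Real.sqrt (1 - s^2) *
        Real.sqrt (1 - ((Real.sqrt b - Real.sqrt a)^2/(Real.sqrt a + Real.sqrt b)^2) * s^2)) := by
    rw [ellipticK, h1m, intervalIntegral.integral_of_le zero_le_one,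
      integral_Ioc_eq_integral_Ioo]
  have hCM : (∫ s in Ioo (0:ℝ) 1,
      (2 / (Real.sqrt a + Real.sqrt b)) *
        (1 / (Real.sqrt (1 - s^2) *
          Real.sqrt (1 - ((Real.sqrt b - Real.sqrt a)^2/(Real.sqrt a + Real.sqrt b)^2) * s^2))))
      = (2 / (Real.sqrt a + Real.sqrt b)) * ellipticK (1 - m) := by
    rw [hK]
    exact integral_const_mul _ _
  rw [hLHS, hsum, integral_Ioc_eq_integral_Ioo, he1, he2, hCM,
    add_comm (Real.sqrt b) (Real.sqrt a)]
  ring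
end

section
/- Let r > 0 and 0 < θ < π. Then the improper integral over the negative half-line evaluates as ∫_{w=−∞}^{0} dw / √(−w·(w² − 2r·cos(θ)·w + r²)) = 2·K(sin(θ/2)²)/√r. -/
open MeasureTheory Real

set_option maxHeartbeats 1000000 in
/-- **Librational period over the negative half-line.** For `r > 0` and `0 < θ < π`,
`∫_{−∞}^{0} dw/√(−w(w² − 2r cos θ · w + r²)) = 2K(sin(θ/2)²)/√r`. -/
theorem librational_negative_halfline_period
    (r θ : ℝ) (hr : 0 < r) (hθ₀ : 0 < θ) (hθπ : θ < Real.pi) :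
    ∫ w in Set.Iio (0 : ℝ),
        1 / Real.sqrt (-w * (w ^ 2 - 2 * r * Real.cos θ * w + r ^ 2))
      = 2 * ellipticK (Real.sin (θ / 2) ^ 2) / Real.sqrt r := by
  set k := Real.sin (θ / 2) with hkdef
  have hhalf₀ : 0 < θ / 2 := by linarith
  have hhalfπ : θ / 2 < Real.pi / 2 := by linarith
  have hk0 : 0 < k := Real.sin_pos_of_pos_of_lt_pi hhalf₀ (by linarith [Real.pi_pos])
  have hcoshalf : 0 < Real.cos (θ / 2) := Real.cos_pos_of_mem_Ioo ⟨by linarith, hhalfπ⟩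
  have hk1 : k < 1 := by
    nlinarith [Real.sin_sq_add_cos_sq (θ / 2)]
  have hc : Real.cos θ = 1 - 2 * k ^ 2 := by
    have : θ = 2 * (θ / 2) := by ring
    rw [this, Real.cos_two_mul, Real.cos_sq']
    ring
  -- positivity of 1 - k^2 sin^2
  have hN : ∀ x : ℝ, 0 < 1 - k ^ 2 * Real.sin x ^ 2 := by
    intro x
    nlinarith [Real.sin_sq_le_one x, sq_nonneg (Real.sin x)]
  have hsqrtr : (0:ℝ) < Real.sqrt r := Real.sqrt_pos.2 hr
  -- the trig integrand
  set h : ℝ → ℝ := fun φ => 1 / Real.sqrt (1 - k ^ 2 * Real.sin φ ^ 2) with hhdef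
  have hcont : Continuous h := by
    apply continuous_const.div
    · exact (Real.continuous_sqrt.comp (by continuity))
    · intro x
      exact ne_of_gt (Real.sqrt_pos.2 (hN x))
  ------------------------------------------------------------------
  -- Step 4: ∫_{Ioo 0 (π/2)} h = ellipticK (k^2)
  ------------------------------------------------------------------
  have img3 : Real.sin '' Set.Ioo 0 (Real.pi / 2) = Set.Ioo (0:ℝ) 1 := by
    ext s
    constructor
    · rintro ⟨u, ⟨hu0, hu1⟩, rfl⟩
      refine ⟨Real.sin_pos_of_pos_of_lt_pi hu0 (by linarith [Real.pi_pos]), ?_⟩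
      calc Real.sin u < Real.sin (Real.pi / 2) := by
              apply Real.strictMonoOn_sin ⟨by linarith, by linarith⟩
                ⟨by linarith [Real.pi_pos], le_refl _⟩ hu1
        _ = 1 := Real.sin_pi_div_two
    · rintro ⟨hs0, hs1⟩
      exact ⟨Real.arcsin s, ⟨Real.arcsin_pos.2 hs0, Real.arcsin_lt_pi_div_two.2 hs1⟩,
        Real.sin_arcsin (by linarith) (by linarith)⟩
  have inj3 : Set.InjOn Real.sin (Set.Ioo 0 (Real.pi / 2)) := by
    apply Real.injOn_sin.mono
    intro x hx
    exact ⟨by linarith [Real.pi_pos, hx.1], hx.2.le⟩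
  have step4 : ellipticK (k ^ 2) = ∫ u in Set.Ioo 0 (Real.pi / 2), h u := by
    rw [ellipticK, intervalIntegral.integral_of_le (by norm_num),
      MeasureTheory.integral_Ioc_eq_integral_Ioo, ← img3,
      MeasureTheory.integral_image_eq_integral_abs_deriv_smul measurableSet_Ioo
        (fun u _ => (Real.hasDerivAt_sin u).hasDerivWithinAt) inj3]
    apply MeasureTheory.setIntegral_congr_fun measurableSet_Ioo
    intro u ⟨hu0, hu1⟩
    have hcu : 0 < Real.cos u := Real.cos_pos_of_mem_Ioo ⟨by linarith [Real.pi_pos], hu1⟩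
    have h1 : Real.sqrt (1 - Real.sin u ^ 2) = Real.cos u := by
      rw [← Real.cos_sq', Real.sqrt_sq hcu.le]
    simp only [smul_eq_mul, h1, abs_of_pos hcu, hhdef]
    rw [mul_one_div, ← div_div, div_self hcu.ne']
  ------------------------------------------------------------------
  -- Step 3: ∫_{Ioo 0 π} h = 2 * ∫_{Ioo 0 (π/2)} h
  ------------------------------------------------------------------
  have hint : ∀ a b : ℝ, IntervalIntegrable h volume a b :=
    fun a b => hcont.intervalIntegrable a b
  have step3 : ∫ φ in Set.Ioo 0 Real.pi, h φ = 2 * ∫ u in Set.Ioo 0 (Real.pi / 2), h u := by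
    have e1 : ∫ φ in Set.Ioo 0 Real.pi, h φ = ∫ φ in (0:ℝ)..Real.pi, h φ := by
      rw [intervalIntegral.integral_of_le Real.pi_pos.le,
        MeasureTheory.integral_Ioc_eq_integral_Ioo]
    have e2 : ∫ u in Set.Ioo 0 (Real.pi / 2), h u = ∫ u in (0:ℝ)..(Real.pi / 2), h u := by
      rw [intervalIntegral.integral_of_le (by linarith [Real.pi_pos]),
        MeasureTheory.integral_Ioc_eq_integral_Ioo]
    rw [e1, e2, ← intervalIntegral.integral_add_adjacent_intervals
      (hint 0 (Real.pi / 2)) (hint (Real.pi / 2) Real.pi)]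
    have e3 : ∫ φ in (Real.pi / 2)..Real.pi, h φ = ∫ u in (0:ℝ)..(Real.pi / 2), h u := by
      have := intervalIntegral.integral_comp_sub_left h Real.pi (a := 0) (b := Real.pi / 2)
      rw [sub_zero, show Real.pi - Real.pi / 2 = Real.pi / 2 by ring] at this
      rw [← this]
      apply intervalIntegral.integral_congr
      intro x _
      simp only [hhdef, Real.sin_pi_sub]
    rw [e3]; ring
  ------------------------------------------------------------------
  -- Step 2: ∫_{Ioi 0} g₁ = (1/2) * ∫_{Ioo 0 π} h  where g₁ t = 1/√((1+t²)² − (2kt)²)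
  ------------------------------------------------------------------
  set g₁ : ℝ → ℝ := fun t => 1 / Real.sqrt ((1 + t ^ 2) ^ 2 - (2 * k * t) ^ 2) with hg1def
  have img2 : (fun φ : ℝ => Real.tan (φ / 2)) '' Set.Ioo 0 Real.pi = Set.Ioi (0:ℝ) := by
    ext y
    constructor
    · rintro ⟨φ, ⟨hφ0, hφπ⟩, rfl⟩
      exact Real.tan_pos_of_pos_of_lt_pi_div_two (by linarith) (by linarith)
    · intro hy
      have hy' : 0 < Real.arctan y := by
        have := Real.arctan_strictMono (show (0:ℝ) < y from hy)
        simpa using this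
      refine ⟨2 * Real.arctan y, ⟨by linarith, ?_⟩, ?_⟩
      · linarith [Real.arctan_lt_pi_div_two y]
      · show Real.tan (2 * Real.arctan y / 2) = y
        rw [show 2 * Real.arctan y / 2 = Real.arctan y by ring, Real.tan_arctan]
  have inj2 : Set.InjOn (fun φ : ℝ => Real.tan (φ / 2)) (Set.Ioo 0 Real.pi) := by
    intro a ha b hb hab
    have h1 := Real.strictMonoOn_tan.injOn
      (show a / 2 ∈ Set.Ioo (-(Real.pi/2)) (Real.pi/2) from
        ⟨by linarith [Real.pi_pos, ha.1], by linarith [ha.2]⟩)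
      (show b / 2 ∈ Set.Ioo (-(Real.pi/2)) (Real.pi/2) from
        ⟨by linarith [Real.pi_pos, hb.1], by linarith [hb.2]⟩) hab
    linarith
  have der2 : ∀ φ ∈ Set.Ioo (0:ℝ) Real.pi,
      HasDerivWithinAt (fun φ : ℝ => Real.tan (φ / 2))
        (1 / Real.cos (φ / 2) ^ 2 * (1 / 2)) (Set.Ioo 0 Real.pi) φ := by
    intro φ hφ
    have hcφ : Real.cos (φ / 2) ≠ 0 := by
      have : 0 < Real.cos (φ / 2) :=
        Real.cos_pos_of_mem_Ioo ⟨by linarith [Real.pi_pos, hφ.1], by linarith [hφ.2]⟩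
      exact this.ne'
    exact (((Real.hasDerivAt_tan hcφ).comp φ ((hasDerivAt_id φ).div_const 2)).congr_deriv
      (by rfl)).hasDerivWithinAt
  have step2 : ∫ t in Set.Ioi (0:ℝ), g₁ t = (1/2) * ∫ φ in Set.Ioo 0 Real.pi, h φ := by
    rw [← img2, MeasureTheory.integral_image_eq_integral_abs_deriv_smul measurableSet_Ioo
      der2 inj2, ← MeasureTheory.integral_const_mul]
    apply MeasureTheory.setIntegral_congr_fun measurableSet_Ioo
    intro φ hφ
    have hcφ : 0 < Real.cos (φ / 2) :=
      Real.cos_pos_of_mem_Ioo ⟨by linarith [Real.pi_pos, hφ.1], by linarith [hφ.2]⟩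
    have hsφ : Real.sin φ = 2 * Real.sin (φ / 2) * Real.cos (φ / 2) := by
      conv_lhs => rw [show φ = 2 * (φ / 2) by ring, Real.sin_two_mul]
    have htan : Real.tan (φ / 2) = Real.sin (φ / 2) / Real.cos (φ / 2) :=
      Real.tan_eq_sin_div_cos _
    have hpyth := Real.sin_sq_add_cos_sq (φ / 2)
    have hX : (1 + Real.tan (φ / 2) ^ 2) ^ 2 - (2 * k * Real.tan (φ / 2)) ^ 2
        = (1 - k ^ 2 * Real.sin φ ^ 2) / (Real.cos (φ / 2) ^ 2) ^ 2 := by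
      rw [htan, hsφ]
      field_simp
      nlinarith [hpyth, sq_nonneg (Real.sin (φ/2)), sq_nonneg (Real.cos (φ/2))]
    have hXs : Real.sqrt ((1 + Real.tan (φ / 2) ^ 2) ^ 2 - (2 * k * Real.tan (φ / 2)) ^ 2)
        = Real.sqrt (1 - k ^ 2 * Real.sin φ ^ 2) / Real.cos (φ / 2) ^ 2 := by
      rw [hX, show (1 - k ^ 2 * Real.sin φ ^ 2) / (Real.cos (φ / 2) ^ 2) ^ 2
        = (Real.sqrt (1 - k ^ 2 * Real.sin φ ^ 2) / Real.cos (φ / 2) ^ 2) ^ 2 by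
          rw [div_pow, Real.sq_sqrt (hN φ).le],
        Real.sqrt_sq (by positivity)]
    simp only [smul_eq_mul, hg1def, hhdef, hXs]
    rw [abs_of_pos (by positivity)]
    have hNφ := hN φ
    have hsq : 0 < Real.sqrt (1 - k ^ 2 * Real.sin φ ^ 2) := Real.sqrt_pos.2 hNφ
    field_simp
  ------------------------------------------------------------------
  -- Step 1: the original integral equals (2/√r) * ∫_{Ioi 0} g₁
  ------------------------------------------------------------------
  have img1 : (fun t : ℝ => -r * t ^ 2) '' Set.Ioi 0 = Set.Iio (0:ℝ) := by
    ext w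
    constructor
    · rintro ⟨t, ht, rfl⟩
      simp only [Set.mem_Iio]
      have h0 : 0 < t := ht
      have := mul_pos hr (mul_pos h0 h0)
      nlinarith
    · intro hw
      have hw' : (0:ℝ) < -w := neg_pos.2 (Set.mem_Iio.1 hw)
      have hwr : (0:ℝ) < -w / r := div_pos hw' hr
      refine ⟨Real.sqrt (-w / r), Real.sqrt_pos.2 hwr, ?_⟩
      simp only
      rw [Real.sq_sqrt hwr.le]
      field_simp
  have inj1 : Set.InjOn (fun t : ℝ => -r * t ^ 2) (Set.Ioi 0) := by
    intro a ha b hb hab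
    simp only at hab
    have ha' : (0:ℝ) < a := ha
    have hb' : (0:ℝ) < b := hb
    rcases lt_trichotomy a b with hlt | heq | hgt
    · exfalso
      have := mul_pos (mul_pos hr (sub_pos.2 hlt)) (add_pos ha' hb')
      nlinarith
    · exact heq
    · exfalso
      have := mul_pos (mul_pos hr (sub_pos.2 hgt)) (add_pos ha' hb')
      nlinarith
  have der1 : ∀ t ∈ Set.Ioi (0:ℝ),
      HasDerivWithinAt (fun t : ℝ => -r * t ^ 2) (-r * (2 * t)) (Set.Ioi 0) t := by
    intro t _
    exact (((hasDerivAt_pow 2 t).const_mul (-r)).congr_deriv (by ring)).hasDerivWithinAt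
  have step1 : ∫ w in Set.Iio (0:ℝ),
      1 / Real.sqrt (-w * (w ^ 2 - 2 * r * Real.cos θ * w + r ^ 2))
      = (2 / Real.sqrt r) * ∫ t in Set.Ioi (0:ℝ), g₁ t := by
    rw [← img1, MeasureTheory.integral_image_eq_integral_abs_deriv_smul measurableSet_Ioi
      der1 inj1, ← MeasureTheory.integral_const_mul]
    apply MeasureTheory.setIntegral_congr_fun measurableSet_Ioi
    intro t ht
    have ht' : (0:ℝ) < t := ht
    have hQeq : -(-r * t ^ 2) * ((-r * t ^ 2) ^ 2 - 2 * r * Real.cos θ * (-r * t ^ 2) + r ^ 2)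
        = (r * t) ^ 2 * r * ((1 + t ^ 2) ^ 2 - (2 * k * t) ^ 2) := by
      rw [hc]; ring
    have hXpos : 0 < (1 + t ^ 2) ^ 2 - (2 * k * t) ^ 2 := by
      have hk2 : k ^ 2 < 1 := by nlinarith
      have h4 : 0 < t ^ 2 * (1 - k ^ 2) := mul_pos (by positivity) (by linarith)
      nlinarith [sq_nonneg (1 - t ^ 2)]
    simp only [smul_eq_mul, hg1def]
    rw [hQeq, Real.sqrt_mul (by positivity), Real.sqrt_mul (sq_nonneg (r * t)),
      Real.sqrt_sq (by positivity)]
    have hrt := mul_pos hr ht'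
    rw [abs_of_nonpos (by nlinarith)]
    have hsX : 0 < Real.sqrt ((1 + t ^ 2) ^ 2 - (2 * k * t) ^ 2) := Real.sqrt_pos.2 hXpos
    field_simp
  ------------------------------------------------------------------
  -- Assemble
  ------------------------------------------------------------------
  rw [step1, step2, step3, ← step4]
  field_simp
end

section
/- Let w₀ < w₁ < 0 be real numbers and set m := 4·√(w₀·w₁)/(√(−w₀) + √(−w₁))², which satisfies 0 < m < 1. Then ∫_{w=w₁}^{0} (2w − w₀ − w₁) / √(−w·(w−w₀)·(w−w₁)) dw = 2·(√(−w₀) + √(−w₁))·E(m). -/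
set_option maxHeartbeats 1000000


open MeasureTheory Real

/-- The complete elliptic integral of the second kind,
`E(m) = ∫₀¹ √(1−m s²)/√(1−s²) ds`. -/
noncomputable def ellipticE (m : ℝ) : ℝ :=
  ∫ s in (0 : ℝ)..1, Real.sqrt (1 - m * s ^ 2) / Real.sqrt (1 - s ^ 2)

section Aux

variable {a b : ℝ}

/-- Integrability on `Ioo 0 b` of functions bounded by `C/√((a²−u²)(b²−u²))`. -/
lemma integrableOn_aux (hb : 0 < b) (hba : b < a) (F : ℝ → ℝ) (C : ℝ)
    (hcont : ContinuousOn F (Set.Ioo 0 b))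
    (hC : ∀ u ∈ Set.Ioo 0 b, |F u| ≤ C / Real.sqrt ((a^2 - u^2) * (b^2 - u^2))) :
    IntegrableOn F (Set.Ioo 0 b) := by
  have ha0 : 0 < a := hb.trans hba
  have hA2 : 0 < a^2 - b^2 := by nlinarith
  have hCpos : 0 ≤ C := by
    have h2 := hC (b/2) ⟨by linarith, by linarith⟩
    have hApos : 0 < Real.sqrt ((a^2 - (b/2)^2) * (b^2 - (b/2)^2)) := by
      apply Real.sqrt_pos.mpr
      have : 0 < a^2 - (b/2)^2 := by nlinarith
      have : 0 < b^2 - (b/2)^2 := by nlinarith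
      positivity
    have h3 : 0 ≤ C / Real.sqrt ((a^2 - (b/2)^2) * (b^2 - (b/2)^2)) :=
      le_trans (abs_nonneg _) h2
    rcases div_nonneg_iff.mp h3 with ⟨h,_⟩ | ⟨_,h⟩
    · exact h
    · linarith
  set D : ℝ := Real.sqrt ((a^2 - b^2) * b) with hD
  have hDpos : 0 < D := Real.sqrt_pos.mpr (by positivity)
  -- the dominating function
  have hdom : IntervalIntegrable (fun u : ℝ => (C/D) * (b - u) ^ (-(1/2) : ℝ))
      volume 0 b := by
    have h1 : IntervalIntegrable (fun x : ℝ => x ^ (-(1/2) : ℝ)) volume b 0 :=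
      intervalIntegral.intervalIntegrable_rpow' (by norm_num)
    simpa using (h1.comp_sub_left b).const_mul (C/D)
  have hdom' : IntegrableOn (fun u : ℝ => (C/D) * (b - u) ^ (-(1/2) : ℝ))
      (Set.Ioo 0 b) volume :=
    (intervalIntegrable_iff_integrableOn_Ioo_of_le hb.le).mp hdom
  apply hdom'.mono' (hcont.aestronglyMeasurable measurableSet_Ioo)
  rw [MeasureTheory.ae_restrict_iff' measurableSet_Ioo]
  filter_upwards with u hu
  obtain ⟨hu0, hub⟩ := hu
  have hkey : D * Real.sqrt (b - u) ≤ Real.sqrt ((a^2 - u^2) * (b^2 - u^2)) := by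
    rw [hD, ← Real.sqrt_mul (by positivity)]
    apply Real.sqrt_le_sqrt
    have e1 : (a^2 - b^2) * (b*(b-u)) ≤ (a^2 - u^2) * ((b+u)*(b-u)) :=
      mul_le_mul (by nlinarith) (by nlinarith) (by nlinarith) (by nlinarith)
    nlinarith [e1]
  have hbu : (0:ℝ) < b - u := by linarith
  have hrw : (b - u) ^ (-(1/2) : ℝ) = (Real.sqrt (b - u))⁻¹ := by
    rw [Real.rpow_neg hbu.le, Real.sqrt_eq_rpow]
  have hsq : 0 < Real.sqrt (b - u) := Real.sqrt_pos.mpr hbu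
  calc ‖F u‖ = |F u| := rfl
    _ ≤ C / Real.sqrt ((a^2 - u^2) * (b^2 - u^2)) := hC u ⟨hu0, hub⟩
    _ ≤ C / (D * Real.sqrt (b - u)) := by
        apply div_le_div_of_nonneg_left hCpos (by positivity) hkey
    _ = (C/D) * (b - u) ^ (-(1/2) : ℝ) := by
        rw [hrw]; field_simp

/-- The key pointwise derivative identity. -/
lemma hasDerivAt_G (hb : 0 < b) (hba : b < a) {u : ℝ} (hu : u ∈ Set.Ioo 0 b) :
    HasDerivAt (fun v => -4 * v * Real.sqrt ((a^2 - v^2) * (b^2 - v^2)) / (a*b + v^2))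
      (2 * (a^2 + b^2 - 2*u^2) / Real.sqrt ((a^2 - u^2) * (b^2 - u^2))
        - 2 * (a+b)^2 * (a*b - u^2)^2
            / ((a*b + u^2)^2 * Real.sqrt ((a^2 - u^2) * (b^2 - u^2)))) u := by
  obtain ⟨hu0, hub⟩ := hu
  have ha0 : 0 < a := hb.trans hba
  have hA : 0 < (a^2 - u^2) * (b^2 - u^2) := by
    have h1 : 0 < a^2 - u^2 := by nlinarith
    have h2 : 0 < b^2 - u^2 := by nlinarith
    positivity
  set t := Real.sqrt ((a^2 - u^2) * (b^2 - u^2)) with htd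
  have ht : 0 < t := Real.sqrt_pos.mpr hA
  have ht2 : t^2 = (a^2 - u^2) * (b^2 - u^2) := Real.sq_sqrt hA.le
  have hden : (a*b + u^2) ≠ 0 := by positivity
  have hA' : HasDerivAt (fun v => (a^2 - v^2) * (b^2 - v^2))
      (-(2*u) * (b^2 - u^2) + (a^2 - u^2) * (-(2*u))) u := by
    have h1 : HasDerivAt (fun v : ℝ => a^2 - v^2) (-(2*u)) u := by
      simpa using (hasDerivAt_pow 2 u).const_sub (a^2)
    have h2 : HasDerivAt (fun v : ℝ => b^2 - v^2) (-(2*u)) u := by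
      simpa using (hasDerivAt_pow 2 u).const_sub (b^2)
    exact h1.mul h2
  have hsq : HasDerivAt (fun v => Real.sqrt ((a^2 - v^2) * (b^2 - v^2)))
      ((-(2*u) * (b^2 - u^2) + (a^2 - u^2) * (-(2*u))) / (2*t)) u :=
    hA'.sqrt hA.ne'
  have hid : HasDerivAt (fun v : ℝ => -4*v) (-4) u := by
    simpa using (hasDerivAt_id u).const_mul (-4)
  have hnum : HasDerivAt (fun v => -4*v * Real.sqrt ((a^2 - v^2) * (b^2 - v^2)))
      ((-4) * t + (-4*u) * ((-(2*u) * (b^2 - u^2) + (a^2 - u^2) * (-(2*u))) / (2*t))) u :=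
    hid.mul hsq
  have hd2 : HasDerivAt (fun v : ℝ => a*b + v^2) (2*u) u := by
    simpa using (hasDerivAt_pow 2 u).const_add (a*b)
  have hq := hnum.div hd2 hden
  refine hq.congr_deriv (Eq.symm ?_)
  rw [← htd]
  field_simp
  ring_nf
  linear_combination (4*(a*b - u^2)) * ht2

lemma key (hb : 0 < b) (hba : b < a) :
    (∫ w in (-(b^2))..(0:ℝ),
        (2*w - -(a^2) - -(b^2)) / Real.sqrt (-w * (w - -(a^2)) * (w - -(b^2))))
      = 2*(a+b) * ellipticE (4*(a*b)/(a+b)^2) := by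
  have ha0 : 0 < a := hb.trans hba
  set ft : ℝ → ℝ := fun u => 2 * (a^2 + b^2 - 2*u^2) / Real.sqrt ((a^2 - u^2) * (b^2 - u^2))
    with hftdef
  set gt : ℝ → ℝ := fun u => 2 * (a+b)^2 * (a*b - u^2)^2
      / ((a*b + u^2)^2 * Real.sqrt ((a^2 - u^2) * (b^2 - u^2))) with hgtdef
  have hApos : ∀ u ∈ Set.Ioo (0:ℝ) b, 0 < (a^2 - u^2) * (b^2 - u^2) := by
    rintro u ⟨hu0, hub⟩
    have h1 : 0 < a^2 - u^2 := by nlinarith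
    have h2 : 0 < b^2 - u^2 := by nlinarith
    positivity
  -- Step 1 : substitution w = -u²
  have himg1 : (fun u : ℝ => -(u^2)) '' Set.Ioo 0 b = Set.Ioo (-(b^2)) 0 := by
    ext w
    constructor
    · rintro ⟨u, ⟨hu0, hub⟩, rfl⟩
      refine ⟨by dsimp only; nlinarith, by dsimp only; nlinarith⟩
    · rintro ⟨hw1, hw0⟩
      refine ⟨Real.sqrt (-w), ⟨Real.sqrt_pos.mpr (by linarith), ?_⟩, ?_⟩
      · have h := Real.sqrt_lt_sqrt (by linarith) (show -w < b^2 by linarith)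
        rwa [Real.sqrt_sq hb.le] at h
      · dsimp only
        rw [Real.sq_sqrt (by linarith)]
        ring
  have hstep1 : (∫ w in Set.Ioo (-(b^2)) (0:ℝ),
        (2*w - -(a^2) - -(b^2)) / Real.sqrt (-w * (w - -(a^2)) * (w - -(b^2))))
      = ∫ u in Set.Ioo (0:ℝ) b, ft u := by
    rw [← himg1,
      MeasureTheory.integral_image_eq_integral_abs_deriv_smul (f' := fun u => -2*u)
        measurableSet_Ioo
        (fun x hx => by
          have : HasDerivAt (fun u : ℝ => -(u^2)) (-2*x) x := by
            exact (hasDerivAt_pow 2 x).neg.congr_deriv (by norm_num [neg_mul])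
          exact this.hasDerivWithinAt)
        (fun x hx y hy hxy => by
          have h2 : x^2 = y^2 := by
            have h' : -(x^2) = -(y^2) := hxy
            linarith
          rw [← Real.sqrt_sq hx.1.le, ← Real.sqrt_sq hy.1.le, h2])]
    apply MeasureTheory.setIntegral_congr_fun measurableSet_Ioo
    rintro u ⟨hu0, hub⟩
    have hA := hApos u ⟨hu0, hub⟩
    have hsA : 0 < Real.sqrt ((a^2 - u^2) * (b^2 - u^2)) := Real.sqrt_pos.mpr hA
    have h1 : -(-(u^2)) * ((-(u^2)) - -(a^2)) * ((-(u^2)) - -(b^2))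
        = u^2 * ((a^2 - u^2) * (b^2 - u^2)) := by ring
    simp only [smul_eq_mul, hftdef]
    rw [h1, Real.sqrt_mul (sq_nonneg u), Real.sqrt_sq hu0.le,
      abs_of_neg (show -2*u < 0 by linarith)]
    field_simp
    ring
  -- Step 2 : substitution s = (a+b)u/(ab+u²) in the elliptic integral
  set σ : ℝ → ℝ := fun u => (a+b)*u / (a*b + u^2) with hσdef
  have hd : ∀ u : ℝ, 0 < a*b + u^2 := fun u => by positivity
  have hσcont : Continuous σ := by
    apply Continuous.div (by fun_prop) (by fun_prop)
    exact fun x => (hd x).ne'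
  have himg2 : σ '' Set.Ioo 0 b = Set.Ioo 0 1 := by
    apply Set.Subset.antisymm
    · rintro s ⟨u, ⟨hu0, hub⟩, rfl⟩
      constructor
      · exact div_pos (by positivity) (hd u)
      · rw [hσdef, div_lt_one (hd u)]
        nlinarith [mul_pos (show 0 < a - u by linarith) (show 0 < b - u by linarith)]
    · have h0 : σ 0 = 0 := by simp [hσdef]
      have hbv : σ b = 1 := by
        rw [hσdef]
        rw [div_eq_one_iff_eq (hd b).ne']
        ring
      have := intermediate_value_Ioo hb.le hσcont.continuousOn
      rw [h0, hbv] at this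
      exact this
  have hσderiv : ∀ x : ℝ, HasDerivAt σ ((a+b)*(a*b - x^2)/((a*b + x^2)^2)) x := by
    intro x
    have h1 : HasDerivAt (fun y : ℝ => (a+b)*y) (a+b) x := by
      simpa using (hasDerivAt_id x).const_mul (a+b)
    have h2 : HasDerivAt (fun y : ℝ => a*b + y^2) (2*x) x := by
      simpa using (hasDerivAt_pow 2 x).const_add (a*b)
    have h3 := h1.div h2 (hd x).ne'
    refine h3.congr_deriv (Eq.symm ?_)
    field_simp
    ring
  have hstep2 : (∫ s in Set.Ioo (0:ℝ) 1,
        Real.sqrt (1 - (4*(a*b)/(a+b)^2) * s^2) / Real.sqrt (1 - s^2))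
      = ∫ u in Set.Ioo (0:ℝ) b,
          (a+b) * (a*b - u^2)^2 / ((a*b + u^2)^2 * Real.sqrt ((a^2 - u^2) * (b^2 - u^2))) := by
    rw [← himg2,
      MeasureTheory.integral_image_eq_integral_abs_deriv_smul
        (f' := fun x => (a+b)*(a*b - x^2)/((a*b + x^2)^2))
        measurableSet_Ioo
        (fun x hx => (hσderiv x).hasDerivWithinAt)
        (fun x hx y hy hxy => by
          have h' : (a+b)*x/(a*b + x^2) = (a+b)*y/(a*b + y^2) := hxy
          rw [div_eq_div_iff (hd x).ne' (hd y).ne'] at h'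
          have h2 : (x - y) * ((a+b) * (a*b - x*y)) = 0 := by linear_combination h'
          rcases mul_eq_zero.mp h2 with h | h
          · linarith
          · exfalso
            have h3 : x*y < b*b := mul_lt_mul'' hx.2 hy.2 hx.1.le hy.1.le
            have h4 : b*b < a*b := by nlinarith
            have h5 : 0 < (a+b) * (a*b - x*y) :=
              mul_pos (by linarith) (by linarith)
            linarith)]
    apply MeasureTheory.setIntegral_congr_fun measurableSet_Ioo
    rintro u ⟨hu0, hub⟩
    have hA := hApos u ⟨hu0, hub⟩
    have hsA : 0 < Real.sqrt ((a^2 - u^2) * (b^2 - u^2)) := Real.sqrt_pos.mpr hA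
    have habu : u^2 < a*b := by nlinarith
    have h1 : 1 - (4*(a*b)/(a+b)^2) * (σ u)^2 = ((a*b - u^2)/(a*b + u^2))^2 := by
      rw [hσdef]
      field_simp
      ring
    have h2 : 1 - (σ u)^2 = ((a^2 - u^2) * (b^2 - u^2))/(a*b + u^2)^2 := by
      rw [hσdef]
      field_simp
      ring
    simp only [smul_eq_mul]
    rw [h1, h2, Real.sqrt_sq (div_nonneg (by linarith) (hd u).le),
      Real.sqrt_div hA.le, Real.sqrt_sq (hd u).le,
      abs_of_pos (div_pos (mul_pos (by linarith) (by linarith)) (by positivity))]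
    field_simp
  -- Step 3 : integrability
  have hcontA : ContinuousOn (fun u => Real.sqrt ((a^2 - u^2) * (b^2 - u^2)))
      (Set.Ioo (0:ℝ) b) := (Real.continuous_sqrt.comp (by fun_prop)).continuousOn
  have hc1 : Continuous (fun u : ℝ => 2 * (a^2 + b^2 - 2*u^2)) := by fun_prop
  have hc2 : Continuous (fun u : ℝ => 2 * (a+b)^2 * (a*b - u^2)^2) := by fun_prop
  have hc3 : Continuous (fun u : ℝ => (a*b + u^2)^2) := by fun_prop
  have hft : IntegrableOn ft (Set.Ioo 0 b) := by
    apply integrableOn_aux hb hba ft (2*(a^2 + b^2))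
    · exact ContinuousOn.div hc1.continuousOn hcontA
        (fun u hu => (Real.sqrt_pos.mpr (hApos u hu)).ne')
    · rintro u ⟨hu0, hub⟩
      have hA := hApos u ⟨hu0, hub⟩
      have hsA : 0 < Real.sqrt ((a^2 - u^2) * (b^2 - u^2)) := Real.sqrt_pos.mpr hA
      rw [hftdef, abs_div, abs_of_pos hsA, div_le_div_iff_of_pos_right hsA]
      rw [abs_of_pos (by nlinarith)]
      nlinarith
  have hgt : IntegrableOn gt (Set.Ioo 0 b) := by
    apply integrableOn_aux hb hba gt (2*(a+b)^2)
    · refine ContinuousOn.div hc2.continuousOn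
        (ContinuousOn.mul hc3.continuousOn hcontA) ?_
      intro u hu
      have hsA : 0 < Real.sqrt ((a^2 - u^2) * (b^2 - u^2)) := Real.sqrt_pos.mpr (hApos u hu)
      positivity
    · rintro u ⟨hu0, hub⟩
      have hA := hApos u ⟨hu0, hub⟩
      have hsA : 0 < Real.sqrt ((a^2 - u^2) * (b^2 - u^2)) := Real.sqrt_pos.mpr hA
      have hnum : (0:ℝ) ≤ 2 * (a+b)^2 * (a*b - u^2)^2 := by positivity
      rw [hgtdef, abs_of_nonneg (by positivity)]
      rw [div_le_div_iff₀ (by positivity) hsA]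
      have hsq : (a*b - u^2)^2 ≤ (a*b + u^2)^2 := by nlinarith [mul_nonneg (mul_pos ha0 hb).le (sq_nonneg u)]
      have hkey := mul_le_mul_of_nonneg_right (mul_le_mul_of_nonneg_left hsq
        (show (0:ℝ) ≤ 2*(a+b)^2 by positivity)) hsA.le
      nlinarith [hkey]
  have hfti : IntervalIntegrable ft volume 0 b :=
    (intervalIntegrable_iff_integrableOn_Ioo_of_le hb.le).mpr hft
  have hgti : IntervalIntegrable gt volume 0 b :=
    (intervalIntegrable_iff_integrableOn_Ioo_of_le hb.le).mpr hgt
  -- Step 4 : FTC for the correction term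
  have hpoly : Continuous (fun u : ℝ => (a^2 - u^2) * (b^2 - u^2)) := by fun_prop
  have hc4 : Continuous (fun u : ℝ => -4*u) := by fun_prop
  have hc5 : Continuous (fun u : ℝ => a*b + u^2) := by fun_prop
  have hG : Continuous (fun u => -4*u * Real.sqrt ((a^2 - u^2) * (b^2 - u^2)) / (a*b + u^2)) :=
    (hc4.mul (Real.continuous_sqrt.comp hpoly)).div hc5 (fun x => (hd x).ne')
  have hftc : (∫ u in (0:ℝ)..b, (ft u - gt u)) = 0 := by
    rw [intervalIntegral.integral_eq_sub_of_hasDeriv_right_of_le hb.le hG.continuousOn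
      (fun x hx => (hasDerivAt_G hb hba hx).hasDerivWithinAt)
      (hfti.sub hgti)]
    simp [sub_self]
  -- Step 5 : assembling everything
  have heq : (∫ u in Set.Ioo (0:ℝ) b, ft u) = ∫ u in Set.Ioo (0:ℝ) b, gt u := by
    have h1 : (∫ u in (0:ℝ)..b, ft u) - ∫ u in (0:ℝ)..b, gt u = 0 := by
      rw [← intervalIntegral.integral_sub hfti hgti]; exact hftc
    have h2 : (∫ u in (0:ℝ)..b, ft u) = ∫ u in Set.Ioo (0:ℝ) b, ft u := by
      rw [intervalIntegral.integral_of_le hb.le, MeasureTheory.integral_Ioc_eq_integral_Ioo]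
    have h3 : (∫ u in (0:ℝ)..b, gt u) = ∫ u in Set.Ioo (0:ℝ) b, gt u := by
      rw [intervalIntegral.integral_of_le hb.le, MeasureTheory.integral_Ioc_eq_integral_Ioo]
    linarith
  have hE : ellipticE (4*(a*b)/(a+b)^2)
      = ∫ s in Set.Ioo (0:ℝ) 1,
          Real.sqrt (1 - (4*(a*b)/(a+b)^2) * s^2) / Real.sqrt (1 - s^2) := by
    rw [ellipticE, intervalIntegral.integral_of_le zero_le_one,
      MeasureTheory.integral_Ioc_eq_integral_Ioo]
  rw [intervalIntegral.integral_of_le (by nlinarith : -(b^2) ≤ (0:ℝ)),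
    MeasureTheory.integral_Ioc_eq_integral_Ioo, hstep1, heq, hE, hstep2,
    ← MeasureTheory.integral_const_mul]
  apply MeasureTheory.setIntegral_congr_fun measurableSet_Ioo
  intro u hu
  dsimp [hgtdef]
  ring

end Aux

/-- **An elliptic integral of the second kind in the rotational case.**
For `w₀ < w₁ < 0` and `m = 4√(w₀w₁)/(√(−w₀)+√(−w₁))²` one has `0 < m < 1` and
`∫_{w₁}^{0} (2w−w₀−w₁) dw/√(−w(w−w₀)(w−w₁)) = 2(√(−w₀)+√(−w₁)) E(m)`. -/
theorem rotational_second_kind_integral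
    (w₀ w₁ m : ℝ) (h₀₁ : w₀ < w₁) (h₁ : w₁ < 0)
    (hm : m = 4 * Real.sqrt (w₀ * w₁) / (Real.sqrt (-w₀) + Real.sqrt (-w₁)) ^ 2) :
    (0 < m ∧ m < 1) ∧
    ∫ w in w₁..(0 : ℝ), (2 * w - w₀ - w₁) / Real.sqrt (-w * (w - w₀) * (w - w₁))
      = 2 * (Real.sqrt (-w₀) + Real.sqrt (-w₁)) * ellipticE m := by
  set a := Real.sqrt (-w₀) with ha
  set b := Real.sqrt (-w₁) with hbdef
  have h₀ : w₀ < 0 := h₀₁.trans h₁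
  have hb : 0 < b := Real.sqrt_pos.mpr (by linarith)
  have hba : b < a := by
    rw [hbdef, ha]; exact Real.sqrt_lt_sqrt (by linarith) (by linarith)
  have ha2 : a^2 = -w₀ := Real.sq_sqrt (by linarith)
  have hb2 : b^2 = -w₁ := Real.sq_sqrt (by linarith)
  have hab : Real.sqrt (w₀ * w₁) = a * b := by
    rw [show w₀ * w₁ = (-w₀) * (-w₁) by ring, ha, hbdef, Real.sqrt_mul (by linarith)]
  have hm' : m = 4*(a*b)/(a+b)^2 := by rw [hm, hab]
  have habpos : 0 < a + b := by linarith
  refine ⟨⟨?_, ?_⟩, ?_⟩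
  · have ha0 : 0 < a := hb.trans hba
    rw [hm']
    exact div_pos (by positivity) (by positivity)
  · have ha0 : 0 < a := hb.trans hba
    rw [hm', div_lt_one (by positivity)]
    nlinarith [sq_nonneg (a - b)]
  · have hw₀ : w₀ = -(a^2) := by linarith
    have hw₁ : w₁ = -(b^2) := by linarith
    rw [hm', hw₀, hw₁]
    exact key hb hba
end
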